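/- arXiv:math/0407042 — 4 statements merged into one kernel-verified Lean document; each statement's English description precedes it below -/
import Mathlib

section
/- With f_0 = n^r, f_1 = r·n^r, f_2 = (5/4)r·n^r - (3/4)n^r + r·n^{r-1}, f_3 = (1/4)r·n^r - (1/2)n^r + r·n^{r-1}, f_{03} = 4r·n^r - 4n^r, the fatness F = (f_1 + f_2 - 20)/(f_0 + f_3 - 10) tends to 9 and the complexity C = f_{03}/(f_0 + f_3 - 10) tends to 16 as n and r tend to infinity. Precisely: for every ε > 0 there exist n, r (n ≥ 4 even, r ≥ 2) with F > 9 - ε and C > 16 - ε. -/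
set_option maxHeartbeats 1000000 in
set_option maxRecDepth 8000 in
/-- Fatness approaches 9 and complexity approaches 16 for the projected
products of polygons. -/
theorem fatness_complexity_unbounded (ε : ℝ) (hε : 0 < ε) :
    ∃ (n r : ℕ), 4 ≤ n ∧ Even n ∧ 2 ≤ r ∧
      (((r:ℝ) * (n:ℝ) ^ r
          + ((5/4) * (r:ℝ) * (n:ℝ) ^ r - (3/4) * (n:ℝ) ^ r + (r:ℝ) * (n:ℝ) ^ (r - 1))
          - 20)
        / ((n:ℝ) ^ r
          + ((1/4) * (r:ℝ) * (n:ℝ) ^ r - (1/2) * (n:ℝ) ^ r + (r:ℝ) * (n:ℝ) ^ (r - 1))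
          - 10)
        > 9 - ε) ∧
      ((4 * (r:ℝ) * (n:ℝ) ^ r - 4 * (n:ℝ) ^ r)
        / ((n:ℝ) ^ r
          + ((1/4) * (r:ℝ) * (n:ℝ) ^ r - (1/2) * (n:ℝ) ^ r + (r:ℝ) * (n:ℝ) ^ (r - 1))
          - 10)
        > 16 - ε) := by
  classical
  set δ : ℝ := min ε 1 with hδdef
  have hδ0 : 0 < δ := lt_min hε one_pos
  have hδ1 : δ ≤ 1 := min_le_right _ _
  have hδε : δ ≤ ε := min_le_left _ _
  set k : ℕ := ⌈(112:ℝ)/δ⌉₊ + 57 with hk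
  refine ⟨2*k, 2*k, by omega, ⟨k, by ring⟩, by omega, ?_, ?_⟩ <;>
  · set c : ℝ := ((2*k : ℕ) : ℝ) with hc
    set p : ℝ := c ^ (2*k - 1) with hp
    have hkc : ((k:ℝ)) ≤ c := by
      rw [hc]; push_cast; nlinarith [Nat.cast_nonneg (α := ℝ) k]
    have hc114 : (114:ℝ) ≤ c := by
      have : (57:ℕ) ≤ k := by omega
      have h57 : (57:ℝ) ≤ (k:ℝ) := by exact_mod_cast this
      rw [hc]; push_cast; linarith
    have hc0 : (0:ℝ) < c := by linarith
    have h112 : 112 < δ * c := by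
      have h1 : (112:ℝ)/δ ≤ (⌈(112:ℝ)/δ⌉₊ : ℝ) := Nat.le_ceil _
      have h2 : ((⌈(112:ℝ)/δ⌉₊ : ℕ) : ℝ) + 57 ≤ (k:ℝ) := by
        rw [hk]; push_cast; linarith
      have h3 : (112:ℝ)/δ < c := by linarith
      calc (112:ℝ) = δ * (112/δ) := by field_simp
        _ < δ * c := by exact mul_lt_mul_of_pos_left h3 hδ0
    have hp1 : (1:ℝ) ≤ p := by
      rw [hp]; exact one_le_pow₀ (by linarith)
    have hp0 : (0:ℝ) < p := by linarith
    have h2k : 2*k - 1 + 1 = 2*k := by omega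
    have hpow : c ^ (2*k) = p * c := by
      rw [hp, ← pow_succ, h2k]
    have hD : (0:ℝ) < c ^ (2*k) + ((1/4) * c * c ^ (2*k) - (1/2) * c ^ (2*k)
        + c * c ^ (2*k - 1)) - 10 := by
      rw [hpow, ← hp]
      nlinarith [mul_pos hp0 hc0, mul_pos (mul_pos hp0 hc0) hc0]
    rw [gt_iff_lt, lt_div_iff₀ hD, hpow, ← hp]
    have hεδ : (0:ℝ) ≤ (ε - δ) * (p * c + (1/4 * c * (p * c) - 1/2 * (p * c) + c * p) - 10) :=
      mul_nonneg (by linarith) (by nlinarith [hD, hpow])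
    nlinarith [mul_pos (sub_pos.mpr h112) (mul_pos hp0 hc0),
      mul_pos (mul_pos hδ0 hp0) hc0, mul_pos hp0 hc0, hεδ, hδ1, hδ0]
end

section
/- For a finite set of vectors v_1, ..., v_k in ℝ^d, the following are equivalent: (i) every x ∈ ℝ^d is a non-negative linear combination of the v_i; (ii) every x ∈ ℝ^d is a positive linear combination of the v_i; (iii) the v_i span ℝ^d and 0 is a linear combination of the v_i with all coefficients strictly positive. -/
/-- Equivalence of the three characterizations of a positively spanning
family of vectors v : Fin k → ℝ^d. -/
theorem positively_spanning_tfae (d k : ℕ) (v : Fin k → (Fin d → ℝ)) :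
    List.TFAE
      [ ∀ x : Fin d → ℝ, ∃ lam : Fin k → ℝ,
          (∀ i, 0 ≤ lam i) ∧ ∑ i, lam i • v i = x,
        ∀ x : Fin d → ℝ, ∃ lam : Fin k → ℝ,
          (∀ i, 0 < lam i) ∧ ∑ i, lam i • v i = x,
        Submodule.span ℝ (Set.range v) = ⊤ ∧
          ∃ lam : Fin k → ℝ, (∀ i, 0 < lam i) ∧ ∑ i, lam i • v i = 0 ] := by
  tfae_have 2 → 1 := by
    intro h x
    obtain ⟨lam, h1, h2⟩ := h x
    exact ⟨lam, fun i => (h1 i).le, h2⟩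
  tfae_have 1 → 3 := by
    intro h
    constructor
    · rw [eq_top_iff]
      intro x _
      obtain ⟨lam, _, h2⟩ := h x
      rw [← h2]
      exact Submodule.sum_mem _ fun i _ =>
        Submodule.smul_mem _ _ (Submodule.subset_span ⟨i, rfl⟩)
    · choose mu hmu hsum using fun i => h (-(v i))
      refine ⟨fun j => 1 + ∑ i, mu i j, fun j =>
        add_pos_of_pos_of_nonneg one_pos (Finset.sum_nonneg fun i _ => hmu i j), ?_⟩
      calc ∑ j, (1 + ∑ i, mu i j) • v j
          = ∑ j, v j + ∑ i, ∑ j, mu i j • v j := by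
            simp [add_smul, Finset.sum_add_distrib, Finset.sum_smul]
            rw [Finset.sum_comm]
        _ = 0 := by simp [hsum]
  tfae_have 3 → 2 := by
    rintro ⟨hspan, lam, hlam, hsum⟩ x
    have hx : x ∈ Submodule.span ℝ (Set.range v) := hspan ▸ Submodule.mem_top
    rw [Finsupp.mem_span_range_iff_exists_finsupp] at hx
    obtain ⟨c0, hc⟩ := hx
    set c : Fin k → ℝ := fun i => c0 i with hcdef
    have hc' : ∑ i, c i • v i = x := by
      rw [← hc, Finsupp.sum_fintype _ _ (fun i => by simp)]
    set t : ℝ := 1 + ∑ i, |c i| / lam i with ht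
    refine ⟨fun i => c i + t * lam i, ?_, ?_⟩
    · intro i
      have h1 : |c i| / lam i ≤ ∑ j, |c j| / lam j :=
        Finset.single_le_sum (f := fun j => |c j| / lam j)
          (fun j _ => div_nonneg (abs_nonneg _) (hlam j).le) (Finset.mem_univ i)
      have h2 : |c i| / lam i < t := by rw [ht]; linarith
      have h3 : |c i| < t * lam i := (div_lt_iff₀ (hlam i)).mp h2
      have := neg_abs_le (c i)
      show 0 < c i + t * lam i
      linarith
    · calc ∑ i, (c i + t * lam i) • v i
          = ∑ i, c i • v i + t • ∑ i, lam i • v i := by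
            simp [add_smul, Finset.sum_add_distrib, mul_smul, Finset.smul_sum]
        _ = x := by rw [hc', hsum]; simp
  tfae_finish
end

section
/- Let π : ℝ^{e+d} → ℝ^d be the projection to the last d coordinates, P ⊂ ℝ^{e+d} a full-dimensional polytope, and G a face of P. If the first-e-coordinate truncations n' of the outer normal vectors n_F = (n', n'') of the facets F of P containing G positively span ℝ^e, then π(G) is a face of π(P), the map G → π(G) is a bijection, and π^{-1}(π(G)) ∩ P = G. -/
open Finset

/-- Scalar product on ℝ^e × ℝ^d. -/
def dotProd {e d : ℕ} (n x : (Fin e → ℝ) × (Fin d → ℝ)) : ℝ :=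
  ∑ i, n.1 i * x.1 i + ∑ j, n.2 j * x.2 j

/-- If the first-e-coordinate parts of the normals of the facets of P
containing the face G positively span ℝ^e, then G is strictly preserved by
the projection to the last d coordinates: π(G) is a face of π(P), π is a
bijection from G to π(G), and π⁻¹(π(G)) ∩ P = G. -/
theorem strictly_preserved_of_positively_spanning
    (e d m : ℕ)
    (N : Fin m → (Fin e → ℝ) × (Fin d → ℝ)) (b : Fin m → ℝ)
    (P : Set ((Fin e → ℝ) × (Fin d → ℝ)))
    (hP : P = {x | ∀ i, dotProd (N i) x ≤ b i})
    (hcompact : IsCompact P)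
    (hfulldim : (interior P).Nonempty)
    (S : Finset (Fin m))   -- the facets of P containing G
    (hfacet : ∀ i ∈ S, ∃ x ∈ P, dotProd (N i) x = b i)
    (G : Set ((Fin e → ℝ) × (Fin d → ℝ)))
    (hG : G = {x ∈ P | ∀ i ∈ S, dotProd (N i) x = b i})
    (hGne : G.Nonempty)
    (hspan : ∀ y : Fin e → ℝ, ∃ lam : Fin m → ℝ,
      (∀ i, 0 ≤ lam i) ∧ (∀ i ∉ S, lam i = 0) ∧ ∑ i, lam i • (N i).1 = y) :
    (∃ c : Fin d → ℝ,
        Prod.snd '' G =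
          {y ∈ Prod.snd '' P | ∀ z ∈ Prod.snd '' P, ∑ j, c j * z j ≤ ∑ j, c j * y j}) ∧
    Set.BijOn Prod.snd G (Prod.snd '' G) ∧
    Prod.snd ⁻¹' (Prod.snd '' G) ∩ P = G := by
  -- G ⊆ P
  have hGP : G ⊆ P := by rw [hG]; intro x hx; exact hx.1
  -- Construct strictly positive coefficients μ supported on S with ∑ μ i • (N i).1 = 0
  obtain ⟨lam, hlam0, hlamS, hlamsum⟩ := hspan (-(∑ i ∈ S, (N i).1))
  set μ : Fin m → ℝ := fun i => lam i + if i ∈ S then 1 else 0 with hμdef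
  have hμ0 : ∀ i, 0 ≤ μ i := by
    intro i
    exact add_nonneg (hlam0 i) (by split <;> norm_num)
  have hμpos : ∀ i ∈ S, 0 < μ i := by
    intro i hi; unfold μ; simp [hi]; linarith [hlam0 i]
  have hμS : ∀ i ∉ S, μ i = 0 := by
    intro i hi; unfold μ; simp [hi, hlamS i hi]
  have hμsum : ∑ i, μ i • (N i).1 = 0 := by
    have h1 : ∑ i, μ i • (N i).1
        = (∑ i, lam i • (N i).1) + ∑ i, (if i ∈ S then (1:ℝ) else 0) • (N i).1 := by
      rw [← Finset.sum_add_distrib]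
      refine Finset.sum_congr rfl fun i _ => ?_
      unfold μ; rw [add_smul]
    have h2 : ∑ i, (if i ∈ S then (1:ℝ) else 0) • (N i).1 = ∑ i ∈ S, (N i).1 := by
      simp only [ite_smul, one_smul, zero_smul]
      rw [← Finset.sum_filter]
      apply Finset.sum_congr _ (fun _ _ => rfl)
      simp [Finset.filter_mem_eq_inter]
    rw [h1, h2, hlamsum]
    simp
  -- pointwise version
  have hμsum' : ∀ k, ∑ i, μ i * (N i).1 k = 0 := by
    intro k
    have := congrFun hμsum k
    simpa [Finset.sum_apply] using this
  -- the objective functional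
  set c : Fin d → ℝ := fun j => ∑ i, μ i * (N i).2 j with hcdef
  set β : ℝ := ∑ i, μ i * b i with hβdef
  -- key identity: for any x, ∑ j c j * x.2 j = ∑ i μ i * dotProd (N i) x
  have hkey : ∀ x : (Fin e → ℝ) × (Fin d → ℝ),
      ∑ j, c j * x.2 j = ∑ i, μ i * dotProd (N i) x := by
    intro x
    have hA : ∑ i, μ i * (∑ k, (N i).1 k * x.1 k) = 0 := by
      calc ∑ i, μ i * (∑ k, (N i).1 k * x.1 k)
          = ∑ i, ∑ k, (μ i * (N i).1 k) * x.1 k := by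
            refine Finset.sum_congr rfl fun i _ => ?_
            rw [Finset.mul_sum]; refine Finset.sum_congr rfl fun k _ => by ring
        _ = ∑ k, (∑ i, μ i * (N i).1 k) * x.1 k := by
            rw [Finset.sum_comm]
            refine Finset.sum_congr rfl fun k _ => ?_
            rw [Finset.sum_mul]
        _ = 0 := by simp [hμsum']
    have hB : ∑ j, c j * x.2 j = ∑ i, μ i * (∑ j, (N i).2 j * x.2 j) := by
      calc ∑ j, c j * x.2 j
          = ∑ j, ∑ i, (μ i * (N i).2 j) * x.2 j := by
            refine Finset.sum_congr rfl fun j _ => ?_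
            unfold c; rw [Finset.sum_mul]
        _ = ∑ i, ∑ j, (μ i * (N i).2 j) * x.2 j := Finset.sum_comm
        _ = ∑ i, μ i * (∑ j, (N i).2 j * x.2 j) := by
            refine Finset.sum_congr rfl fun i _ => ?_
            rw [Finset.mul_sum]; refine Finset.sum_congr rfl fun j _ => by ring
    rw [hB]
    have : ∑ i, μ i * dotProd (N i) x
        = ∑ i, μ i * (∑ k, (N i).1 k * x.1 k) + ∑ i, μ i * (∑ j, (N i).2 j * x.2 j) := by
      rw [← Finset.sum_add_distrib]
      refine Finset.sum_congr rfl fun i _ => ?_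
      unfold dotProd; ring
    rw [this, hA, zero_add]
  -- for x ∈ P, the value is ≤ β
  have hle : ∀ x ∈ P, ∑ j, c j * x.2 j ≤ β := by
    intro x hx
    rw [hkey]
    refine Finset.sum_le_sum fun i _ => ?_
    have : dotProd (N i) x ≤ b i := by rw [hP] at hx; exact hx i
    exact mul_le_mul_of_nonneg_left this (hμ0 i)
  -- for x ∈ P, equality holds iff x ∈ G
  have hiff : ∀ x ∈ P, (x ∈ G ↔ ∑ j, c j * x.2 j = β) := by
    intro x hx
    rw [hkey]
    constructor
    · intro hxG
      refine Finset.sum_congr rfl fun i _ => ?_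
      by_cases hi : i ∈ S
      · rw [hG] at hxG; rw [hxG.2 i hi]
      · rw [hμS i hi]; ring
    · intro heq
      have hterm : ∀ i ∈ (Finset.univ : Finset (Fin m)), μ i * dotProd (N i) x ≤ μ i * b i := by
        intro i _
        have : dotProd (N i) x ≤ b i := by rw [hP] at hx; exact hx i
        exact mul_le_mul_of_nonneg_left this (hμ0 i)
      have hall := (Finset.sum_eq_sum_iff_of_le hterm).mp heq
      rw [hG]
      refine ⟨hx, fun i hi => ?_⟩
      have h := hall i (Finset.mem_univ i)
      exact mul_left_cancel₀ (ne_of_gt (hμpos i hi)) h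
  obtain ⟨g, hg⟩ := hGne
  have hgβ : ∑ j, c j * g.2 j = β := (hiff g (hGP hg)).mp hg
  refine ⟨⟨c, ?_⟩, ⟨?_, ?_, ?_⟩, ?_⟩
  · -- π(G) is the face of π(P) maximizing c
    ext y
    constructor
    · rintro ⟨x, hxG, rfl⟩
      refine ⟨⟨x, hGP hxG, rfl⟩, ?_⟩
      rintro z ⟨w, hwP, rfl⟩
      have h1 := hle w hwP
      have h2 := (hiff x (hGP hxG)).mp hxG
      linarith
    · rintro ⟨⟨x, hxP, rfl⟩, hmax⟩
      have h1 : ∑ j, c j * g.2 j ≤ ∑ j, c j * x.2 j := hmax _ ⟨g, hGP hg, rfl⟩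
      have h2 := hle x hxP
      have : ∑ j, c j * x.2 j = β := le_antisymm h2 (by linarith)
      exact ⟨x, (hiff x hxP).mpr this, rfl⟩
  · -- MapsTo
    intro x hx; exact ⟨x, hx, rfl⟩
  · -- InjOn
    intro x hx y hy hxy
    have hdots : ∀ i ∈ S, ∑ k, (N i).1 k * x.1 k = ∑ k, (N i).1 k * y.1 k := by
      intro i hi
      rw [hG] at hx hy
      have h1 := hx.2 i hi
      have h2 := hy.2 i hi
      unfold dotProd at h1 h2
      have : ∑ j, (N i).2 j * x.2 j = ∑ j, (N i).2 j * y.2 j := by rw [hxy]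
      linarith
    have h1 : x.1 = y.1 := by
      funext k
      obtain ⟨lam', h0', hS', hsum'⟩ := hspan (Pi.single k (1:ℝ))
      have hs : ∀ l, ∑ i, lam' i * (N i).1 l = (Pi.single k 1 : Fin e → ℝ) l := by
        intro l
        have := congrFun hsum' l
        simpa [Finset.sum_apply] using this
      have hx1 : ∀ u : Fin e → ℝ, u k = ∑ i, lam' i * (∑ l, (N i).1 l * u l) := by
        intro u
        calc u k = ∑ l, (Pi.single k 1 : Fin e → ℝ) l * u l := by
              rw [Finset.sum_eq_single k]
              · simp
              · intro l _ hl; simp [Pi.single_apply, hl]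
              · intro h; exact absurd (Finset.mem_univ k) h
          _ = ∑ l, (∑ i, lam' i * (N i).1 l) * u l := by
              refine Finset.sum_congr rfl fun l _ => ?_; rw [hs l]
          _ = ∑ l, ∑ i, (lam' i * (N i).1 l) * u l := by
              refine Finset.sum_congr rfl fun l _ => ?_; rw [Finset.sum_mul]
          _ = ∑ i, ∑ l, (lam' i * (N i).1 l) * u l := Finset.sum_comm
          _ = ∑ i, lam' i * (∑ l, (N i).1 l * u l) := by
              refine Finset.sum_congr rfl fun i _ => ?_
              rw [Finset.mul_sum]; refine Finset.sum_congr rfl fun l _ => by ring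
      rw [hx1 x.1, hx1 y.1]
      refine Finset.sum_congr rfl fun i _ => ?_
      by_cases hi : i ∈ S
      · rw [hdots i hi]
      · rw [hS' i hi]; ring
    exact Prod.ext h1 hxy
  · -- SurjOn
    intro y hy; exact hy
  · -- preimage ∩ P = G
    ext x
    constructor
    · rintro ⟨⟨w, hwG, hwx⟩, hxP⟩
      have : ∑ j, c j * x.2 j = β := by
        rw [← hwx]
        exact (hiff w (hGP hwG)).mp hwG
      exact (hiff x hxP).mpr this
    · intro hx
      exact ⟨⟨x, hx, rfl⟩, hGP hx⟩
end

section
/- For the perturbed vectors v_i^ε ∈ ℝ² defined by v_i^ε = (1 - ε(n-2-2i)², ε(n-2-2i)) for even i ∈ {0, ..., n-2}, v_i^ε = ε·(1 - ε(n-2-2i)², ε(n-2-2i)) for odd i ∈ {1, ..., n-3}, and v_{n-1}^ε = (-ε, 0), with n ≥ 4 even: for all sufficiently small ε > 0 these n vectors are pairwise distinct, non-zero, and positively span ℝ². -/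
/-- The perturbed polygon normal vectors. -/
noncomputable def vEps (n : ℕ) (ε : ℝ) (i : Fin n) : ℝ × ℝ :=
  if (i : ℕ) = n - 1 then (-ε, 0)
  else if Even (i : ℕ) then
    (1 - ε * ((n:ℝ) - 2 - 2 * (i:ℕ)) ^ 2, ε * ((n:ℝ) - 2 - 2 * (i:ℕ)))
  else
    ε • (1 - ε * ((n:ℝ) - 2 - 2 * (i:ℕ)) ^ 2, ε * ((n:ℝ) - 2 - 2 * (i:ℕ)))

set_option maxHeartbeats 1000000 in
/-- For all sufficiently small ε > 0 the perturbed vectors v_i^ε are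
pairwise distinct, non-zero, and positively span ℝ². -/
theorem perturbed_vectors_positively_span (n : ℕ) (hn : 4 ≤ n) (hne : Even n) :
    ∃ ε₀ > (0:ℝ), ∀ ε : ℝ, 0 < ε → ε < ε₀ →
      Function.Injective (vEps n ε) ∧
      (∀ i, vEps n ε i ≠ 0) ∧
      (∀ y : ℝ × ℝ, ∃ lam : Fin n → ℝ,
        (∀ i, 0 ≤ lam i) ∧ ∑ i, lam i • vEps n ε i = y) := by
  have hn0 : 0 < n := by omega
  have hN4 : (4:ℝ) ≤ (n:ℝ) := by exact_mod_cast hn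
  refine ⟨1 / (2 * (n:ℝ)^2), by positivity, ?_⟩
  intro ε hε hε'
  rw [lt_div_iff₀ (by positivity)] at hε'
  have hεn : ε * (n:ℝ)^2 < 1/2 := by nlinarith
  have hεhalf : ε < 1/2 := by nlinarith
  have hfb : ∀ i : Fin n, (i:ℕ) ≠ n - 1 →
      ε * ((n:ℝ) - 2 - 2 * (i:ℕ)) ^ 2 < 1/2 := by
    intro i hi
    have h1 : (i:ℕ) ≤ n - 2 := by have := i.isLt; omega
    have h2 : ((i:ℕ):ℝ) ≤ (n:ℝ) - 2 := by
      have := (Nat.cast_le (α := ℝ)).2 h1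
      rwa [Nat.cast_sub (by omega)] at this
      
    have h3 : (0:ℝ) ≤ ((i:ℕ):ℝ) := Nat.cast_nonneg _
    nlinarith
  have hfinj : ∀ i j : Fin n,
      (n:ℝ) - 2 - 2 * ((i:ℕ):ℝ) = (n:ℝ) - 2 - 2 * ((j:ℕ):ℝ) → i = j := by
    intro i j h
    have : ((i:ℕ):ℝ) = ((j:ℕ):ℝ) := by linarith
    exact Fin.ext (Nat.cast_injective this)
  refine ⟨?_, ?_, ?_⟩
  · -- injectivity
    intro i j hij
    unfold vEps at hij
    by_cases hi : (i:ℕ) = n - 1 <;> by_cases hj : (j:ℕ) = n - 1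
    · exact Fin.ext (hi.trans hj.symm)
    · rw [if_pos hi, if_neg hj] at hij
      by_cases hje : Even (j:ℕ)
      · rw [if_pos hje] at hij
        have h1 := congrArg Prod.fst hij
        have := hfb j hj
        simp only at h1
        exfalso; linarith
      · rw [if_neg hje] at hij
        have h1 := congrArg Prod.fst hij
        have := hfb j hj
        simp only [Prod.smul_fst, smul_eq_mul] at h1
        exfalso
        have h4 : 0 < ε * (1 - ε * ((n:ℝ) - 2 - 2 * ((j:ℕ):ℝ)) ^ 2) :=
          mul_pos hε (by linarith)
        linarith
    · rw [if_neg hi, if_pos hj] at hij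
      by_cases hie : Even (i:ℕ)
      · rw [if_pos hie] at hij
        have h1 := congrArg Prod.fst hij
        have := hfb i hi
        simp only at h1
        exfalso; linarith
      · rw [if_neg hie] at hij
        have h1 := congrArg Prod.fst hij
        have := hfb i hi
        simp only [Prod.smul_fst, smul_eq_mul] at h1
        exfalso
        have h4 : 0 < ε * (1 - ε * ((n:ℝ) - 2 - 2 * ((i:ℕ):ℝ)) ^ 2) :=
          mul_pos hε (by linarith)
        linarith
    · rw [if_neg hi, if_neg hj] at hij
      by_cases hie : Even (i:ℕ) <;> by_cases hje : Even (j:ℕ)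
      · rw [if_pos hie, if_pos hje] at hij
        have h2 := congrArg Prod.snd hij
        simp only at h2
        exact hfinj i j (mul_left_cancel₀ hε.ne' h2)
      · rw [if_pos hie, if_neg hje] at hij
        have h1 := congrArg Prod.fst hij
        have hbi := hfb i hi
        simp only [Prod.smul_fst, smul_eq_mul] at h1
        exfalso
        have hj2 : (0:ℝ) ≤ ε * ((n:ℝ) - 2 - 2 * ((j:ℕ):ℝ)) ^ 2 := by positivity
        have h4 : ε * (1 - ε * ((n:ℝ) - 2 - 2 * ((j:ℕ):ℝ)) ^ 2) ≤ ε * 1 :=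
          mul_le_mul_of_nonneg_left (by linarith) hε.le
        linarith
      · rw [if_neg hie, if_pos hje] at hij
        have h1 := congrArg Prod.fst hij
        have hbj := hfb j hj
        simp only [Prod.smul_fst, smul_eq_mul] at h1
        exfalso
        have hi2 : (0:ℝ) ≤ ε * ((n:ℝ) - 2 - 2 * ((i:ℕ):ℝ)) ^ 2 := by positivity
        have h4 : ε * (1 - ε * ((n:ℝ) - 2 - 2 * ((i:ℕ):ℝ)) ^ 2) ≤ ε * 1 :=
          mul_le_mul_of_nonneg_left (by linarith) hε.le
        linarith
      · rw [if_neg hie, if_neg hje] at hij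
        have h2 := congrArg Prod.snd hij
        simp only [Prod.smul_snd, smul_eq_mul] at h2
        have h3 : ε * ((n:ℝ) - 2 - 2 * ((i:ℕ):ℝ)) = ε * ((n:ℝ) - 2 - 2 * ((j:ℕ):ℝ)) :=
          mul_left_cancel₀ hε.ne' h2
        exact hfinj i j (mul_left_cancel₀ hε.ne' h3)
  · -- nonzero
    intro i hzero
    have h1 := congrArg Prod.fst hzero
    unfold vEps at h1
    by_cases hi : (i:ℕ) = n - 1
    · rw [if_pos hi] at h1
      simp only [Prod.fst_zero] at h1
      linarith
    · have hb := hfb i hi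
      rw [if_neg hi] at h1
      by_cases hie : Even (i:ℕ)
      · rw [if_pos hie] at h1
        simp only [Prod.fst_zero] at h1
        linarith
      · rw [if_neg hie] at h1
        simp only [Prod.smul_fst, smul_eq_mul, Prod.fst_zero] at h1
        have h4 : 0 < ε * (1 - ε * ((n:ℝ) - 2 - 2 * ((i:ℕ):ℝ)) ^ 2) :=
          mul_pos hε (by linarith)
        linarith
  · -- positive spanning
    intro y
    obtain ⟨y1, y2⟩ := y
    set i0 : Fin n := ⟨0, by omega⟩ with hi0def
    set i1 : Fin n := ⟨n - 2, by omega⟩ with hi1def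
    set i2 : Fin n := ⟨n - 1, by omega⟩ with hi2def
    have h01 : i0 ≠ i1 := by simp [hi0def, hi1def, Fin.ext_iff]; omega
    have h02 : i0 ≠ i2 := by simp [hi0def, hi2def, Fin.ext_iff]; omega
    have h12 : i1 ≠ i2 := by simp [hi1def, hi2def, Fin.ext_iff]; omega
    set A : ℝ := 1 - ε * ((n:ℝ) - 2)^2 with hAdef
    set B : ℝ := ε * ((n:ℝ) - 2) with hBdef
    have hA : 1/2 < A := by
      have := hfb i0 (by simp [hi0def]; omega)
      simp [hi0def] at this
      rw [hAdef]; nlinarith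
    have hB : 0 < B := by rw [hBdef]; nlinarith
    have hcast : ((n - 2 : ℕ) : ℝ) = (n:ℝ) - 2 := by
      rw [Nat.cast_sub (by omega)]; norm_num
    have hv0 : vEps n ε i0 = (A, B) := by
      unfold vEps
      rw [if_neg (by simp [hi0def]; omega), if_pos (by simp [hi0def])]
      simp [hi0def, hAdef, hBdef]
    have hv1 : vEps n ε i1 = (A, -B) := by
      unfold vEps
      rw [if_neg (by simp [hi1def]; omega),
        if_pos (by simp [hi1def]; exact (Nat.even_sub (by omega)).2 (by simp [hne]))]
      simp only [hi1def, hcast]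
      rw [hAdef, hBdef, Prod.mk.injEq]
      constructor <;> ring
    have hv2 : vEps n ε i2 = (-ε, 0) := by
      unfold vEps
      rw [if_pos (by simp [hi2def])]
    set t : ℝ := max (max (-(y1/(2*A) + y2/(2*B))) (-(y1/(2*A) - y2/(2*B)))) 0 with htdef
    have ht0 : 0 ≤ t := le_max_right _ _
    have ht1 : -(y1/(2*A) + y2/(2*B)) ≤ t := le_trans (le_max_left _ _) (le_max_left _ _)
    have ht2 : -(y1/(2*A) - y2/(2*B)) ≤ t := le_trans (le_max_right _ _) (le_max_left _ _)
    set α : ℝ := y1/(2*A) + y2/(2*B) + t with hαdef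
    set β : ℝ := y1/(2*A) - y2/(2*B) + t with hβdef
    set γ : ℝ := 2*A*t/ε with hγdef
    refine ⟨fun i => if i = i0 then α else if i = i1 then β else if i = i2 then γ else 0,
      ?_, ?_⟩
    · intro i
      dsimp only
      split_ifs
      · rw [hαdef]; linarith
      · rw [hβdef]; linarith
      · rw [hγdef]; positivity
      · exact le_refl 0
    · have hpt : ∀ i : Fin n,
          (if i = i0 then α else if i = i1 then β else if i = i2 then γ else 0) • vEps n ε i
          = (if i = i0 then α • vEps n ε i0 else 0) + (if i = i1 then β • vEps n ε i1 else 0)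
            + (if i = i2 then γ • vEps n ε i2 else 0) := by
        intro i
        by_cases e0 : i = i0
        · subst e0; simp [h01, h02, (Ne.symm h01), (Ne.symm h02)]
        · by_cases e1 : i = i1
          · subst e1; simp [e0, h12, Ne.symm h01]
          · by_cases e2 : i = i2 <;>
              simp [e0, e1, e2, Ne.symm h01, Ne.symm h02, Ne.symm h12]
      rw [Finset.sum_congr rfl (fun i _ => hpt i)]
      rw [Finset.sum_add_distrib, Finset.sum_add_distrib]
      rw [Finset.sum_ite_eq' Finset.univ i0, Finset.sum_ite_eq' Finset.univ i1,
        Finset.sum_ite_eq' Finset.univ i2]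
      simp only [Finset.mem_univ, if_true, hv0, hv1, hv2]
      have hAne : A ≠ 0 := by linarith
      have hBne : B ≠ 0 := hB.ne'
      have hεne : ε ≠ 0 := hε.ne'
      rw [Prod.ext_iff]
      constructor
      · simp only [Prod.smul_mk, Prod.mk_add_mk, smul_eq_mul, Prod.fst_add]
        rw [hαdef, hβdef, hγdef]
        field_simp
        ring
      · simp only [Prod.smul_mk, Prod.mk_add_mk, smul_eq_mul, Prod.snd_add]
        rw [hαdef, hβdef, hγdef]
        field_simp
        ring
end
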